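/- For all integers n, ℓ with 1 ≤ ℓ ≤ n−1, the von Neumann entropy (in bits) of the ℓ-qubit reduced density matrix of W_n (the partial trace of |W_n⟩⟨W_n| over the last n−ℓ qubits) equals −(ℓ/n)·log₂(ℓ/n) − ((n−ℓ)/n)·log₂((n−ℓ)/n). -/

import Mathlib

/-!
STATEMENT 5: For all integers n, ℓ with 1 ≤ ℓ ≤ n−1, the von Neumann entropy (in bits)
of the ℓ-qubit reduced density matrix of W_n (the partial trace of |W_n⟩⟨W_n| over the
last n−ℓ qubits) equals −(ℓ/n)·log₂(ℓ/n) − ((n−ℓ)/n)·log₂((n−ℓ)/n).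
-/

/-- Glue a length-`l` bit string and a length-`n-l` bit string into a length-`n` bit
string, realizing the identification of `ℂ^{2^n}` with `ℂ^{2^l} ⊗ ℂ^{2^{n-l}}`. -/
def glueBits {l n : ℕ} (hl : l ≤ n) (k : Fin l → Fin 2) (m : Fin (n - l) → Fin 2) :
    Fin n → Fin 2 :=
  fun i => if h : (i : ℕ) < l then k ⟨i, h⟩ else m ⟨(i : ℕ) - l, by have := i.isLt; omega⟩

/-- The `n`-qubit W state `W_n = (1/√n) ∑_j e_{x_j}`. -/
noncomputable def wState (n : ℕ) : (Fin n → Fin 2) → ℂ :=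
  fun v => (1 / Real.sqrt n) *
    ∑ j : Fin n, if v = (fun i => if i = j then 1 else 0) then 1 else 0

/-- The rank-one projection `|W_n⟩⟨W_n|`, written as a matrix on the pair index
`(Fin l → Fin 2) × (Fin (n-l) → Fin 2)` via the identification `glueBits`. -/
noncomputable def wPairedProj (n l : ℕ) (hl : l ≤ n) :
    Matrix ((Fin l → Fin 2) × (Fin (n - l) → Fin 2))
      ((Fin l → Fin 2) × (Fin (n - l) → Fin 2)) ℂ :=
  Matrix.of fun p q =>
    wState n (glueBits hl p.1 p.2) * star (wState n (glueBits hl q.1 q.2))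

/-- Partial trace over the second tensor factor:
`(Tr_B ρ)_{k,k'} = ∑_m ρ_{(k,m),(k',m)}`. -/
noncomputable def ptraceB {α β : Type*} [Fintype β]
    (ρ : Matrix (α × β) (α × β) ℂ) : Matrix α α ℂ :=
  Matrix.of fun k k' => ∑ m : β, ρ (k, m) (k', m)

/-- The von Neumann entropy in bits, `S(ρ) = −∑ᵢ λᵢ log₂ λᵢ`, of a Hermitian matrix
(with the convention `0·log₂ 0 = 0`, which holds automatically since
`Real.logb 2 0 = 0`). -/
noncomputable def vnEntropy {ι : Type*} [Fintype ι] [DecidableEq ι]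
    {ρ : Matrix ι ι ℂ} (h : ρ.IsHermitian) : ℝ :=
  -∑ i, h.eigenvalues i * Real.logb 2 (h.eigenvalues i)

/-! ### Auxiliary definitions and lemmas -/

def wDelta {l : ℕ} (j : Fin l) : Fin l → Fin 2 := fun i => if i = j then 1 else 0

lemma wDelta_injective {l : ℕ} : Function.Injective (wDelta (l := l)) := by
  intro j j' hj
  by_contra hne
  have h1 := congrFun hj j
  simp [wDelta, hne] at h1

lemma wDelta_ne_zero {l : ℕ} (j : Fin l) : wDelta j ≠ 0 := by
  intro hz
  have := congrFun hz j
  simp [wDelta] at this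

lemma wState_sum (n : ℕ) (v : Fin n → Fin 2) :
    (∑ j : Fin n, if v = (fun i => if i = j then 1 else 0) then (1:ℂ) else 0)
      = if ∃ j : Fin n, v = wDelta j then 1 else 0 := by
  classical
  simp only [show ∀ j : Fin n, (fun i => if i = j then (1 : Fin 2) else 0) = wDelta j
    from fun j => rfl]
  by_cases hv : ∃ j : Fin n, v = wDelta j
  · obtain ⟨j0, rfl⟩ := hv
    rw [if_pos ⟨j0, rfl⟩, Finset.sum_eq_single j0]
    · simp [wDelta]
    · intro j _ hj
      rw [if_neg]
      intro hc
      exact hj (wDelta_injective hc.symm)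
    · simp
  · rw [if_neg hv, Finset.sum_eq_zero]
    intro j _
    rw [if_neg]
    exact fun hc => hv ⟨j, hc⟩

lemma exists_glue {l n : ℕ} (hl : l ≤ n) (k : Fin l → Fin 2) (m : Fin (n - l) → Fin 2) :
    (∃ j : Fin n, glueBits hl k m = wDelta j) ↔
      ((∃ i, k = wDelta i) ∧ m = 0) ∨ (k = 0 ∧ ∃ i, m = wDelta i) := by
  constructor
  · rintro ⟨j, hj⟩
    by_cases hjl : (j : ℕ) < l
    · left
      constructor
      · refine ⟨⟨j, hjl⟩, funext fun i => ?_⟩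
        have := congrFun hj ⟨i, lt_of_lt_of_le i.isLt hl⟩
        simp only [glueBits, wDelta] at this ⊢
        rw [dif_pos i.isLt] at this
        simp only [Fin.eta] at this
        rw [this]
        congr 1
        simp [Fin.ext_iff]
      · funext x
        have hx : (l + (x : ℕ)) < n := by have := x.isLt; omega
        have := congrFun hj ⟨l + x, hx⟩
        simp only [glueBits, wDelta] at this
        rw [dif_neg (by omega)] at this
        simp only [show l + (x:ℕ) - l = (x:ℕ) by omega] at this
        rw [show (⟨(x:ℕ), by omega⟩ : Fin (n - l)) = x by simp [Fin.ext_iff]] at this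
        rw [this, if_neg (by simp [Fin.ext_iff]; omega)]
        rfl
    · right
      constructor
      · funext i
        have := congrFun hj ⟨i, lt_of_lt_of_le i.isLt hl⟩
        simp only [glueBits, wDelta] at this
        rw [dif_pos i.isLt] at this
        simp only [Fin.eta] at this
        rw [this, if_neg (by simp [Fin.ext_iff]; omega)]
        rfl
      · refine ⟨⟨(j : ℕ) - l, by have := j.isLt; omega⟩, funext fun x => ?_⟩
        have hx : (l + (x : ℕ)) < n := by have := x.isLt; omega
        have := congrFun hj ⟨l + x, hx⟩
        simp only [glueBits, wDelta] at this
        rw [dif_neg (by omega)] at this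
        simp only [show l + (x:ℕ) - l = (x:ℕ) by omega] at this
        rw [show (⟨(x:ℕ), by omega⟩ : Fin (n - l)) = x by simp [Fin.ext_iff]] at this
        rw [this, if_congr (by simp only [Fin.ext_iff]; omega :
          ((⟨l + (x:ℕ), hx⟩ : Fin n) = j) ↔ (x = ⟨(j:ℕ) - l, by have := j.isLt; omega⟩))
          rfl rfl]
        rfl
  · rintro (⟨⟨i, rfl⟩, rfl⟩ | ⟨rfl, ⟨i, rfl⟩⟩)
    · refine ⟨⟨i, lt_of_lt_of_le i.isLt hl⟩, funext fun x => ?_⟩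
      simp only [glueBits, wDelta]
      by_cases hx : (x : ℕ) < l
      · rw [dif_pos hx]
        have : ((⟨x, hx⟩ : Fin l) = i) ↔ (x = ⟨i, lt_of_lt_of_le i.isLt hl⟩) := by
          simp [Fin.ext_iff]
        simp only [this]
      · rw [dif_neg hx, if_neg (by simp [Fin.ext_iff]; omega)]
        rfl
    · refine ⟨⟨l + i, by have := i.isLt; omega⟩, funext fun x => ?_⟩
      simp only [glueBits, wDelta]
      by_cases hx : (x : ℕ) < l
      · rw [dif_pos hx, if_neg (by simp [Fin.ext_iff]; omega)]
        rfl
      · rw [dif_neg hx]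
        have : ((⟨(x:ℕ) - l, by have := x.isLt; omega⟩ : Fin (n - l)) = i)
            ↔ (x = ⟨l + i, by have := i.isLt; omega⟩) := by
          simp only [Fin.ext_iff]; omega
        simp only [this]

noncomputable def wInd {l : ℕ} : (Fin l → Fin 2) → ℂ := fun k =>
  if ∃ i : Fin l, k = wDelta i then 1 else 0

noncomputable def zInd {l : ℕ} : (Fin l → Fin 2) → ℂ := fun k => if k = 0 then 1 else 0

lemma sum_wInd_mul_wInd (l : ℕ) : ∑ k : Fin l → Fin 2, wInd k * wInd k = (l : ℂ) := by
  classical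
  have h1 : ∀ k : Fin l → Fin 2, wInd k * wInd k = wInd k := by
    intro k; unfold wInd; split_ifs <;> simp
  rw [Finset.sum_congr rfl fun k _ => h1 k]
  unfold wInd
  rw [Finset.sum_boole]
  have h2 : Finset.univ.filter (fun k : Fin l → Fin 2 => ∃ i, k = wDelta i)
      = Finset.univ.image wDelta := by
    ext k; simp [eq_comm]
  rw [h2, Finset.card_image_of_injective _ wDelta_injective, Finset.card_univ, Fintype.card_fin]

lemma sum_wInd_mul_zInd (l : ℕ) : ∑ k : Fin l → Fin 2, wInd k * zInd k = 0 := by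
  apply Finset.sum_eq_zero
  intro k _
  unfold wInd zInd
  split_ifs with h1 h2
  · obtain ⟨i, rfl⟩ := h1
    exact absurd h2 (wDelta_ne_zero i)
  all_goals simp

lemma sum_zInd_mul_zInd (l : ℕ) : ∑ k : Fin l → Fin 2, zInd k * zInd k = 1 := by
  classical
  unfold zInd
  rw [Finset.sum_congr rfl (fun k _ => by split_ifs <;> simp : ∀ k ∈ Finset.univ,
    (if k = (0 : Fin l → Fin 2) then (1:ℂ) else 0) * (if k = 0 then 1 else 0)
      = if k = 0 then 1 else 0)]
  simp

lemma star_wInd {l : ℕ} (k : Fin l → Fin 2) : star (wInd k) = wInd k := by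
  unfold wInd; split_ifs <;> simp

lemma star_zInd {l : ℕ} (k : Fin l → Fin 2) : star (zInd k) = zInd k := by
  unfold zInd; split_ifs <;> simp

noncomputable def NN (l : ℕ) (a b : ℂ) : Matrix (Fin l → Fin 2) (Fin l → Fin 2) ℂ :=
  Matrix.of fun k k' => a * (wInd k * wInd k') + b * (zInd k * zInd k')

lemma indP {l n : ℕ} (hl : l ≤ n) (k : Fin l → Fin 2) (m : Fin (n - l) → Fin 2) :
    (if ∃ j : Fin n, glueBits hl k m = wDelta j then (1:ℂ) else 0)
      = wInd k * zInd m + zInd k * wInd m := by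
  classical
  rw [if_congr (exists_glue hl k m) rfl rfl]
  have hk : (∃ i, k = wDelta i) → k ≠ 0 := by rintro ⟨i, rfl⟩; exact wDelta_ne_zero i
  have hm : (∃ i, m = wDelta i) → m ≠ 0 := by rintro ⟨i, rfl⟩; exact wDelta_ne_zero i
  unfold wInd zInd
  by_cases h1 : ∃ i, k = wDelta i <;> by_cases h2 : m = 0 <;>
    by_cases h3 : k = 0 <;> by_cases h4 : ∃ i, m = wDelta i <;>
    simp_all

lemma NN_mul (l : ℕ) (a b c d : ℂ) : NN l a b * NN l c d = NN l (a * c * l) (b * d) := by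
  ext k k'
  simp only [NN, Matrix.mul_apply, Matrix.of_apply]
  have key : ∀ k'' : Fin l → Fin 2,
      (a * (wInd k * wInd k'') + b * (zInd k * zInd k'')) *
        (c * (wInd k'' * wInd k') + d * (zInd k'' * zInd k'))
      = (a * c * (wInd k * wInd k')) * (wInd k'' * wInd k'')
        + ((a * d * (wInd k * zInd k')) * (wInd k'' * zInd k'')
        + ((b * c * (zInd k * wInd k')) * (wInd k'' * zInd k'')
        + (b * d * (zInd k * zInd k')) * (zInd k'' * zInd k''))) := fun k'' => by ring
  rw [Finset.sum_congr rfl fun k'' _ => key k'']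
  rw [Finset.sum_add_distrib, Finset.sum_add_distrib, Finset.sum_add_distrib,
    ← Finset.mul_sum, ← Finset.mul_sum, ← Finset.mul_sum, ← Finset.mul_sum,
    sum_wInd_mul_wInd, sum_wInd_mul_zInd, sum_zInd_mul_zInd]
  ring

lemma trace_NN (l : ℕ) (a b : ℂ) : (NN l a b).trace = a * l + b := by
  unfold Matrix.trace Matrix.diag NN
  simp only [Matrix.of_apply]
  rw [Finset.sum_add_distrib, ← Finset.mul_sum, ← Finset.mul_sum,
    sum_wInd_mul_wInd, sum_zInd_mul_zInd, mul_one]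

lemma ptrace_eq (n l : ℕ) (hl : l ≤ n) :
    ptraceB (wPairedProj n l hl) = NN l (1/(n:ℂ)) (((n:ℂ) - l)/n) := by
  classical
  have hw : ∀ (k : Fin l → Fin 2) (m : Fin (n - l) → Fin 2),
      wState n (glueBits hl k m)
        = (1 / ((Real.sqrt n : ℝ) : ℂ)) * (wInd k * zInd m + zInd k * wInd m) := by
    intro k m
    unfold wState
    rw [wState_sum, indP hl k m]
  have hw' : ∀ (k : Fin l → Fin 2) (m : Fin (n - l) → Fin 2),
      star ((1 / ((Real.sqrt n : ℝ) : ℂ)) * (wInd k * zInd m + zInd k * wInd m))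
        = (1 / ((Real.sqrt n : ℝ) : ℂ)) * (wInd k * zInd m + zInd k * wInd m) := by
    intro k m
    rw [star_mul', star_add, star_mul', star_mul', star_wInd, star_zInd,
      star_wInd, star_zInd, star_div₀, star_one, Complex.star_def, Complex.conj_ofReal]
  ext k k'
  simp only [ptraceB, wPairedProj, Matrix.of_apply, NN]
  simp only [hw, hw']
  have csq : (1 / ((Real.sqrt n : ℝ) : ℂ)) * (1 / ((Real.sqrt n : ℝ) : ℂ)) = 1 / (n : ℂ) := by
    rw [div_mul_div_comm, one_mul, ← Complex.ofReal_mul,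
      Real.mul_self_sqrt (Nat.cast_nonneg n)]
    push_cast
    ring
  have key : ∀ m : Fin (n - l) → Fin 2,
      (1 / ((Real.sqrt n : ℝ) : ℂ)) * (wInd k * zInd m + zInd k * wInd m) *
        ((1 / ((Real.sqrt n : ℝ) : ℂ)) * (wInd k' * zInd m + zInd k' * wInd m))
      = ((1 / ((Real.sqrt n : ℝ) : ℂ)) * (1 / ((Real.sqrt n : ℝ) : ℂ)))
          * ((wInd k * wInd k') * (zInd m * zInd m)
        + ((wInd k * zInd k') * (wInd m * zInd m)
        + ((zInd k * wInd k') * (wInd m * zInd m)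
        + (zInd k * zInd k') * (wInd m * wInd m)))) := fun m => by ring
  rw [Finset.sum_congr rfl fun m _ => key m, ← Finset.mul_sum, csq,
    Finset.sum_add_distrib, Finset.sum_add_distrib, Finset.sum_add_distrib,
    ← Finset.mul_sum, ← Finset.mul_sum, ← Finset.mul_sum, ← Finset.mul_sum,
    sum_wInd_mul_wInd, sum_wInd_mul_zInd, sum_zInd_mul_zInd, Nat.cast_sub hl]
  ring

lemma herm_trace_eq_sum {ι : Type*} [Fintype ι] [DecidableEq ι] {A : Matrix ι ι ℂ}
    (h : A.IsHermitian) : A.trace = ∑ i, (h.eigenvalues i : ℂ) := by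
  conv_lhs => rw [h.spectral_theorem, Unitary.conjStarAlgAut_apply]
  rw [Matrix.trace_mul_cycle, Unitary.coe_star_mul_self, Matrix.one_mul, Matrix.trace_diagonal]
  simp

lemma herm_trace_sq_eq_sum {ι : Type*} [Fintype ι] [DecidableEq ι] {A : Matrix ι ι ℂ}
    (h : A.IsHermitian) : (A * A).trace = ∑ i, (h.eigenvalues i : ℂ) ^ 2 := by
  conv_lhs => rw [h.spectral_theorem, Unitary.conjStarAlgAut_apply]
  rw [show ∀ U D V : Matrix ι ι ℂ, U*D*V*(U*D*V) = U*D*(V*U)*D*V by intros; noncomm_ring]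
  rw [Unitary.coe_star_mul_self, Matrix.mul_one, Matrix.trace_mul_cycle, ← Matrix.mul_assoc,
    Unitary.coe_star_mul_self, Matrix.one_mul, Matrix.diagonal_mul_diagonal,
    Matrix.trace_diagonal]
  simp [sq]

open Matrix in
lemma eig_mem_of_cubic {ι : Type*} [Fintype ι] [DecidableEq ι] {A : Matrix ι ι ℂ}
    (h : A.IsHermitian) (a b : ℝ)
    (key : A * (A - (a:ℂ) • 1) * (A - (b:ℂ) • 1) = 0) (i : ι) :
    h.eigenvalues i = 0 ∨ h.eigenvalues i = a ∨ h.eigenvalues i = b := by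
  set lam := h.eigenvalues i with hlam
  have hv : A *ᵥ ⇑(h.eigenvectorBasis i) = ((lam : ℂ)) • ⇑(h.eigenvectorBasis i) := by
    have := h.mulVec_eigenvectorBasis i
    rw [this]
    funext x
    simp [Complex.real_smul, hlam]
  set v : ι → ℂ := ⇑(h.eigenvectorBasis i) with hvdef
  have hvne : v ≠ 0 := by
    intro hz
    exact h.eigenvectorBasis.toBasis.ne_zero i (by
      apply PiLp.ext; intro x; exact congrFun hz x)
  have step1 : (A - (b:ℂ) • 1) *ᵥ v = ((lam : ℂ) - b) • v := by
    rw [Matrix.sub_mulVec, Matrix.smul_mulVec, Matrix.one_mulVec, hv, sub_smul]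
  have step2 : ((A - (a:ℂ) • 1) * (A - (b:ℂ) • 1)) *ᵥ v
      = (((lam : ℂ) - a) * ((lam:ℂ) - b)) • v := by
    rw [← Matrix.mulVec_mulVec, step1, Matrix.mulVec_smul, Matrix.sub_mulVec,
      Matrix.smul_mulVec, Matrix.one_mulVec, hv]
    module
  have step3 : (A * (A - (a:ℂ) • 1) * (A - (b:ℂ) • 1)) *ᵥ v
      = ((lam : ℂ) * (((lam : ℂ) - a) * ((lam:ℂ) - b))) • v := by
    rw [Matrix.mul_assoc, ← Matrix.mulVec_mulVec, step2, Matrix.mulVec_smul, hv]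
    module
  rw [key, Matrix.zero_mulVec] at step3
  have hz : (lam : ℂ) * (((lam : ℂ) - a) * ((lam:ℂ) - b)) = 0 := by
    rcases smul_eq_zero.mp step3.symm with h' | h'
    · exact h'
    · exact absurd h' hvne
  rcases mul_eq_zero.mp hz with h' | h'
  · exact Or.inl (by exact_mod_cast h')
  · rcases mul_eq_zero.mp h' with h'' | h''
    · exact Or.inr (Or.inl (by have := sub_eq_zero.mp h''; exact_mod_cast this))
    · exact Or.inr (Or.inr (by have := sub_eq_zero.mp h''; exact_mod_cast this))

lemma entropy_of_two_levels {ι : Type*} [Fintype ι] (lam : ι → ℝ) (a b : ℝ)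
    (ha : 0 < a) (hb : 0 < b)
    (hmem : ∀ i, lam i = 0 ∨ lam i = a ∨ lam i = b)
    (hsum : ∑ i, lam i = a + b) (hsq : ∑ i, lam i ^ 2 = a ^ 2 + b ^ 2) :
    ∑ i, lam i * Real.logb 2 (lam i) = a * Real.logb 2 a + b * Real.logb 2 b := by
  set g : ℝ → ℝ := fun x => x * Real.logb 2 x with hg
  obtain ⟨c, d, hca, hcb⟩ : ∃ c d : ℝ, c * a + d * a ^ 2 = g a ∧ c * b + d * b ^ 2 = g b := by
    by_cases hab : a = b
    · refine ⟨g a / a, 0, ?_, ?_⟩ <;> subst hab <;> field_simp <;> simp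
    · refine ⟨g a / a - ((g a / a - g b / b) / (a - b)) * a,
        (g a / a - g b / b) / (a - b), ?_, ?_⟩ <;>
      · have : a - b ≠ 0 := sub_ne_zero.mpr hab
        field_simp
        ring
  have key : ∀ i, g (lam i) = c * lam i + d * lam i ^ 2 := by
    intro i
    rcases hmem i with h | h | h <;> rw [h]
    · simp [hg]
    · exact hca.symm
    · exact hcb.symm
  calc ∑ i, g (lam i) = ∑ i, (c * lam i + d * lam i ^ 2) := Finset.sum_congr rfl fun i _ => key i
    _ = c * (∑ i, lam i) + d * (∑ i, lam i ^ 2) := by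
        rw [Finset.sum_add_distrib, Finset.mul_sum, Finset.mul_sum]
    _ = (c * a + d * a ^ 2) + (c * b + d * b ^ 2) := by rw [hsum, hsq]; ring
    _ = _ := by rw [hca, hcb]

lemma cube_expand {ι : Type*} [Fintype ι] [DecidableEq ι] (X : Matrix ι ι ℂ) (c d : ℂ) :
    X * (X - c • 1) * (X - d • 1) = X * X * X - (c + d) • (X * X) + (d * c) • X := by
  simp only [Matrix.mul_sub, Matrix.sub_mul, Matrix.mul_smul, Matrix.smul_mul,
    Matrix.mul_one, Matrix.one_mul, smul_smul, add_smul, smul_sub]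
  abel

theorem w_state_subsystem_entropy (n l : ℕ) (h1 : 1 ≤ l) (h2 : l ≤ n - 1)
    (h : (ptraceB (wPairedProj n l (by omega))).IsHermitian) :
    vnEntropy h =
      -((l : ℝ) / n) * Real.logb 2 ((l : ℝ) / n) -
        (((n : ℝ) - l) / n) * Real.logb 2 (((n : ℝ) - l) / n) := by
  have hn2 : 2 ≤ n := by omega
  have hln : l < n := by omega
  suffices H : ∀ (A : Matrix (Fin l → Fin 2) (Fin l → Fin 2) ℂ) (hA : A.IsHermitian),
      A = NN l (1/(n:ℂ)) (((n:ℂ) - l)/n) → vnEntropy hA =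
      -((l : ℝ) / n) * Real.logb 2 ((l : ℝ) / n) -
        (((n : ℝ) - l) / n) * Real.logb 2 (((n : ℝ) - l) / n) by
    exact H _ h (ptrace_eq n l (by omega))
  intro A hA hEq
  subst hEq
  have hnR : (0:ℝ) < n := by exact_mod_cast Nat.pos_of_ne_zero (by omega)
  have hnC : (n:ℂ) ≠ 0 := Nat.cast_ne_zero.mpr (by omega)
  set a : ℝ := (l:ℝ)/n with hadef
  set b : ℝ := ((n:ℝ) - l)/n with hbdef
  have ha : 0 < a := by
    rw [hadef]
    apply div_pos _ hnR
    exact_mod_cast h1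
  have hb : 0 < b := by
    rw [hbdef]
    apply div_pos _ hnR
    rw [sub_pos]
    exact_mod_cast hln
  have tr1 : ((∑ i, hA.eigenvalues i : ℝ) : ℂ) = ((a + b : ℝ) : ℂ) := by
    push_cast
    rw [← herm_trace_eq_sum hA, trace_NN, hadef, hbdef]
    push_cast
    field_simp
  have hsum : ∑ i, hA.eigenvalues i = a + b := Complex.ofReal_inj.mp tr1
  have tr2 : ((∑ i, (hA.eigenvalues i) ^ 2 : ℝ) : ℂ) = ((a ^ 2 + b ^ 2 : ℝ) : ℂ) := by
    push_cast
    rw [← herm_trace_sq_eq_sum hA, NN_mul, trace_NN, hadef, hbdef]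
    push_cast
    field_simp
  have hsq : ∑ i, (hA.eigenvalues i) ^ 2 = a ^ 2 + b ^ 2 := Complex.ofReal_inj.mp tr2
  have key : NN l (1/(n:ℂ)) (((n:ℂ) - l)/n) * (NN l (1/(n:ℂ)) (((n:ℂ) - l)/n) - ((a:ℝ):ℂ) • 1)
      * (NN l (1/(n:ℂ)) (((n:ℂ) - l)/n) - ((b:ℝ):ℂ) • 1) = 0 := by
    rw [cube_expand, NN_mul, NN_mul]
    ext k k'
    simp only [NN, Matrix.sub_apply, Matrix.add_apply, Matrix.smul_apply, Matrix.of_apply,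
      Matrix.zero_apply, smul_eq_mul, hadef, hbdef]
    push_cast
    field_simp
    ring
  have hmem := fun i => eig_mem_of_cubic hA a b key i
  have final := entropy_of_two_levels hA.eigenvalues a b ha hb hmem hsum hsq
  unfold vnEntropy
  rw [final]
  ring
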